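/- Let (q,n) be a Dickson pair. Then n divides (q^n - 1)/(q - 1); that is, n ∣ ∑_{i=0}^{n-1} q^i. Equivalently, n(q - 1) divides q^n - 1. -/

import Mathlib

/-- A pair `(q, n)` of natural numbers is a Dickson pair if `q = p^l` for some prime `p`
and integer `l ≥ 1`, every prime divisor of `n` divides `q - 1`, and if `q ≡ 3 (mod 4)`
then `4` does not divide `n`. -/
def DicksonPair (q n : ℕ) : Prop :=
  (∃ p l : ℕ, p.Prime ∧ 1 ≤ l ∧ q = p ^ l) ∧
  (∀ r : ℕ, r.Prime → r ∣ n → r ∣ q - 1) ∧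
  (q % 4 = 3 → ¬ (4 ∣ n))

lemma geom_split (q m : ℕ) (j : ℕ) :
    ∑ i ∈ Finset.range (j * m), q ^ i
      = (∑ k ∈ Finset.range j, (q ^ m) ^ k) * ∑ i ∈ Finset.range m, q ^ i := by
  induction j with
  | zero => simp
  | succ j ih =>
      rw [Nat.succ_mul, Finset.sum_range_add, ih, Finset.sum_range_succ, add_mul]
      congr 1
      rw [Finset.mul_sum]
      simp [pow_add, pow_mul, mul_comm]

lemma sub_one_mul_geom (q : ℕ) (hq : 1 ≤ q) (n : ℕ) :
    (q - 1) * ∑ i ∈ Finset.range n, q ^ i = q ^ n - 1 := by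
  induction n with
  | zero => simp
  | succ n ih =>
      rw [Finset.sum_range_succ, Nat.mul_add, ih, pow_succ]
      have h1 : 1 ≤ q ^ n := Nat.one_le_pow _ _ hq
      have h2 : q ^ n ≤ q ^ n * q := Nat.le_mul_of_pos_right _ hq
      have h3 : (q - 1) * q ^ n = q ^ n * q - q ^ n := by
        rw [Nat.sub_mul, one_mul, mul_comm]
      omega

lemma dvd_geom_sum_aux (q : ℕ) (hq : 1 ≤ q) :
    ∀ n : ℕ, (∀ r : ℕ, r.Prime → r ∣ n → r ∣ q - 1) →
      n ∣ ∑ i ∈ Finset.range n, q ^ i := by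
  intro n
  induction n using Nat.strong_induction_on with
  | _ n ih =>
    intro hprimes
    rcases Nat.eq_zero_or_pos n with rfl | hn
    · simp
    rcases eq_or_lt_of_le (show 1 ≤ n from hn) with h1 | h1
    · simp [← h1]
    obtain ⟨p, hp, hpn⟩ := Nat.exists_prime_and_dvd (by omega : n ≠ 1)
    obtain ⟨m, rfl⟩ := hpn
    have hm0 : 0 < m := by
      rcases Nat.eq_zero_or_pos m with rfl | h
      · simp at hn
      · exact h
    have hm : m < p * m := by
      have := hp.two_le
      nlinarith
    have hmdvd : m ∣ ∑ i ∈ Finset.range m, q ^ i :=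
      ih m hm (fun r hr hrm => hprimes r hr (hrm.mul_left p))
    have key : ∑ i ∈ Finset.range (p * m), q ^ i
        = (∑ k ∈ Finset.range p, (q ^ m) ^ k) * ∑ i ∈ Finset.range m, q ^ i :=
      geom_split q m p
    rw [key]
    have hpq : p ∣ q - 1 := hprimes p hp ⟨m, rfl⟩
    have hpsum : p ∣ ∑ k ∈ Finset.range p, (q ^ m) ^ k := by
      haveI : Fact p.Prime := ⟨hp⟩
      have hq1 : (q : ZMod p) = 1 := by
        have h0 : ((q - 1 : ℕ) : ZMod p) = 0 :=
          (ZMod.natCast_eq_zero_iff _ _).2 hpq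
        have hq' : (q : ℕ) = (q - 1) + 1 := by omega
        rw [hq', Nat.cast_add, h0, Nat.cast_one, zero_add]
      have h0 : ((∑ k ∈ Finset.range p, (q ^ m) ^ k : ℕ) : ZMod p) = 0 := by
        push_cast
        rw [hq1]
        simp [ZMod.natCast_self]
      exact (ZMod.natCast_eq_zero_iff _ _).1 h0
    exact mul_dvd_mul hpsum hmdvd

/-- For a Dickson pair `(q, n)`, `n` divides the geometric sum
`∑_{i=0}^{n-1} q^i = (q^n - 1)/(q - 1)`; equivalently, `n·(q - 1)` divides `q^n - 1`. -/
theorem dickson_pair_dvd_geom_sum (q n : ℕ) (h : DicksonPair q n) :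
    (n ∣ ∑ i ∈ Finset.range n, q ^ i) ∧ (n * (q - 1) ∣ q ^ n - 1) := by
  obtain ⟨⟨p, l, hp, hl, rfl⟩, hprimes, -⟩ := h
  have hq : 1 ≤ p ^ l := Nat.one_le_pow _ _ hp.pos
  have h1 := dvd_geom_sum_aux _ hq n hprimes
  refine ⟨h1, ?_⟩
  obtain ⟨c, hc⟩ := h1
  exact ⟨c, by rw [← sub_one_mul_geom _ hq n, hc]; ring⟩
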